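/- There exists a finite rotation-puzzle instance 𝒜 over the three-color tile set T_3 (the COPY subpuzzle, splitting a wire into two copies) with one designated input boundary edge at its bottom and two designated output boundary edges at its top lying in two distinct columns, such that for each color c ∈ {blue, red} the instance 𝒜 has exactly one solution whose color at the input edge is c, and this solution has color c at both output edges. -/

import Mathlib

/-- The three Tantrix colors used in the three-color tile set. -/
inductive Color where
  | red
  | yellow
  | blue
deriving DecidableEq

/-- A tile is its clockwise color sequence: a word of length 6 over the colors,
edges indexed `0, …, 5` clockwise. -/
abbrev Tile := Fin 6 → Color

/-- Cyclic rotation of a tile by `k` steps: edge `i` of the rotated tile carries the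
color of edge `i + k` of the original sequence. -/
def rotTile (k : Fin 6) (t : Tile) : Tile := fun i => t (i + k)

open Color in
/-- The three-color tile set `T₃`, consisting of the 14 color sequences
yrrbby, ryybbr, yrrybb, ryyrbb, brrbyy, yrbybr, rbyryb, brybyr, brbyyr, bybrry,
ryrbby, rbryyb, ybyrrb, yrybbr. -/
def T3 : Set Tile :=
  { ![yellow,red,red,blue,blue,yellow],
    ![red,yellow,yellow,blue,blue,red],
    ![yellow,red,red,yellow,blue,blue],
    ![red,yellow,yellow,red,blue,blue],
    ![blue,red,red,blue,yellow,yellow],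
    ![yellow,red,blue,yellow,blue,red],
    ![red,blue,yellow,red,yellow,blue],
    ![blue,red,yellow,blue,yellow,red],
    ![blue,red,blue,yellow,yellow,red],
    ![blue,yellow,blue,red,red,yellow],
    ![red,yellow,red,blue,blue,yellow],
    ![red,blue,red,yellow,yellow,blue],
    ![yellow,blue,yellow,red,red,blue],
    ![yellow,red,yellow,blue,blue,red] }

/-- The six neighbor offsets of the hexagonal layout of `ℤ²`, listed clockwise
starting from straight up; edge `i` of a tile at `x` is the edge shared with the
neighboring point `x + dirs i`, and opposite directions differ by `3` (mod 6).
Two points are neighbors exactly if their difference is one of these offsets. -/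
def dirs : Fin 6 → ℤ × ℤ := ![(0,1), (1,1), (1,0), (0,-1), (-1,-1), (-1,0)]

/-- A finite rotation-puzzle instance over the tile set `T3`:
a function from a finite set of points of `ℤ²` to `T3`. -/
structure Puzzle where
  tiles : ℤ × ℤ → Option Tile
  finite : {x | tiles x ≠ none}.Finite
  memT3 : ∀ x t, tiles x = some t → t ∈ T3

/-- `sol` is a solution of the instance `P`: it assigns to each occupied point a
cyclic rotation of the tile placed there, such that for every pair of neighboring
occupied points the two assigned sequences give the same color to their joint edge
(edge `d` of the tile at `x` is glued to edge `d + 3` of the tile at `x + dirs d`). -/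
def IsSolution (P : Puzzle) (sol : ℤ × ℤ → Option Tile) : Prop :=
  (∀ x, (P.tiles x = none → sol x = none) ∧
    (∀ t, P.tiles x = some t → ∃ k : Fin 6, sol x = some (rotTile k t))) ∧
  (∀ (x : ℤ × ℤ) (d : Fin 6) (s s' : Tile),
    sol x = some s → sol (x + dirs d) = some s' → s d = s' (d + 3))

/-- `(x, d)` is a boundary edge of `P`: the point `x` is occupied and its
neighbor in direction `d` is not. -/
def IsBoundary (P : Puzzle) (x : ℤ × ℤ) (d : Fin 6) : Prop :=
  P.tiles x ≠ none ∧ P.tiles (x + dirs d) = none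

/-- The solution `sol` has color `c` at the edge in direction `d` of the tile at `x`. -/
def SolColor (sol : ℤ × ℤ → Option Tile) (x : ℤ × ℤ) (d : Fin 6) (c : Color) : Prop :=
  ∃ s, sol x = some s ∧ s d = c

open Color in
def tA : Tile := ![yellow,red,red,blue,blue,yellow]
open Color in
def tB : Tile := ![yellow,red,blue,yellow,blue,red]
open Color in
def tC : Tile := ![yellow,red,yellow,blue,blue,red]

def Pt : ℤ × ℤ → Option Tile := fun x =>
  if x = ((0:ℤ),(0:ℤ)) then some tA
  else if x = ((0:ℤ),(1:ℤ)) then some tB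
  else if x = ((1:ℤ),(1:ℤ)) then some tC
  else if x = ((1:ℤ),(2:ℤ)) then some tA
  else none

lemma tA_mem : tA ∈ T3 := Set.mem_insert _ _
lemma tB_mem : tB ∈ T3 := by
  refine Set.mem_insert_of_mem _ (Set.mem_insert_of_mem _ (Set.mem_insert_of_mem _
    (Set.mem_insert_of_mem _ (Set.mem_insert_of_mem _ (Set.mem_insert _ _)))))
lemma tC_mem : tC ∈ T3 := by
  unfold T3
  simp only [Set.mem_insert_iff, Set.mem_singleton_iff]
  tauto

def Pz : Puzzle where
  tiles := Pt
  finite := by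
    apply Set.Finite.subset (Set.toFinite
      ({((0:ℤ),(0:ℤ)), ((0:ℤ),(1:ℤ)), ((1:ℤ),(1:ℤ)), ((1:ℤ),(2:ℤ))} : Set (ℤ × ℤ)))
    intro x hx
    simp only [Set.mem_setOf_eq, Pt] at hx
    split_ifs at hx with h1 h2 h3 h4
    · simp [h1]
    · simp [h2]
    · simp [h3]
    · simp [h4]
    · exact absurd rfl hx
  memT3 := by
    intro x t h
    simp only [Pt] at h
    split_ifs at h <;> first
      | (injection h with h; subst h; exact tA_mem)
      | (injection h with h; subst h; exact tB_mem)
      | (injection h with h; subst h; exact tC_mem)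

def solOf (k0 k1 k2 k3 : Fin 6) : ℤ × ℤ → Option Tile := fun x =>
  if x = ((0:ℤ),(0:ℤ)) then some (rotTile k0 tA)
  else if x = ((0:ℤ),(1:ℤ)) then some (rotTile k1 tB)
  else if x = ((1:ℤ),(1:ℤ)) then some (rotTile k2 tC)
  else if x = ((1:ℤ),(2:ℤ)) then some (rotTile k3 tA)
  else none

def Compat (k0 k1 k2 k3 : Fin 6) : Prop :=
  rotTile k0 tA 0 = rotTile k1 tB 3 ∧
  rotTile k0 tA 1 = rotTile k2 tC 4 ∧
  rotTile k1 tB 1 = rotTile k3 tA 4 ∧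
  rotTile k1 tB 2 = rotTile k2 tC 5 ∧
  rotTile k2 tC 0 = rotTile k3 tA 3

instance (k0 k1 k2 k3 : Fin 6) : Decidable (Compat k0 k1 k2 k3) := by
  unfold Compat; infer_instance

lemma dirs0 : dirs 0 = ((0:ℤ),(1:ℤ)) := rfl
lemma dirs1 : dirs 1 = ((1:ℤ),(1:ℤ)) := rfl
lemma dirs2 : dirs 2 = ((1:ℤ),(0:ℤ)) := rfl
lemma dirs3 : dirs 3 = ((0:ℤ),(-1:ℤ)) := rfl
lemma dirs4 : dirs 4 = ((-1:ℤ),(-1:ℤ)) := rfl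
lemma dirs5 : dirs 5 = ((-1:ℤ),(0:ℤ)) := rfl

lemma isSolution_iff (sol : ℤ × ℤ → Option Tile) :
    IsSolution Pz sol ↔ ∃ k0 k1 k2 k3 : Fin 6,
      Compat k0 k1 k2 k3 ∧ sol = solOf k0 k1 k2 k3 := by
  constructor
  · rintro ⟨h1, h2⟩
    obtain ⟨k0, e0⟩ := (h1 ((0:ℤ),(0:ℤ))).2 tA (by norm_num [Pz, Pt])
    obtain ⟨k1, e1⟩ := (h1 ((0:ℤ),(1:ℤ))).2 tB (by norm_num [Pz, Pt, Prod.ext_iff])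
    obtain ⟨k2, e2⟩ := (h1 ((1:ℤ),(1:ℤ))).2 tC (by norm_num [Pz, Pt, Prod.ext_iff])
    obtain ⟨k3, e3⟩ := (h1 ((1:ℤ),(2:ℤ))).2 tA (by norm_num [Pz, Pt, Prod.ext_iff])
    refine ⟨k0, k1, k2, k3, ⟨?_, ?_, ?_, ?_, ?_⟩, ?_⟩
    · exact h2 ((0:ℤ),(0:ℤ)) 0 _ _ e0
        (by rw [show ((0:ℤ),(0:ℤ)) + dirs 0 = ((0:ℤ),(1:ℤ)) by decide]; exact e1)
    · exact h2 ((0:ℤ),(0:ℤ)) 1 _ _ e0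
        (by rw [show ((0:ℤ),(0:ℤ)) + dirs 1 = ((1:ℤ),(1:ℤ)) by decide]; exact e2)
    · exact h2 ((0:ℤ),(1:ℤ)) 1 _ _ e1
        (by rw [show ((0:ℤ),(1:ℤ)) + dirs 1 = ((1:ℤ),(2:ℤ)) by decide]; exact e3)
    · exact h2 ((0:ℤ),(1:ℤ)) 2 _ _ e1
        (by rw [show ((0:ℤ),(1:ℤ)) + dirs 2 = ((1:ℤ),(1:ℤ)) by decide]; exact e2)
    · exact h2 ((1:ℤ),(1:ℤ)) 0 _ _ e2
        (by rw [show ((1:ℤ),(1:ℤ)) + dirs 0 = ((1:ℤ),(2:ℤ)) by decide]; exact e3)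
    · funext x
      by_cases hx0 : x = ((0:ℤ),(0:ℤ))
      · subst hx0; rw [e0]; simp [solOf]
      · by_cases hx1 : x = ((0:ℤ),(1:ℤ))
        · subst hx1; rw [e1]; norm_num [solOf, Prod.ext_iff]
        · by_cases hx2 : x = ((1:ℤ),(1:ℤ))
          · subst hx2; rw [e2]; norm_num [solOf, Prod.ext_iff]
          · by_cases hx3 : x = ((1:ℤ),(2:ℤ))
            · subst hx3; rw [e3]; norm_num [solOf, Prod.ext_iff]
            · rw [(h1 x).1 (by simp only [Pz, Pt, if_neg hx0, if_neg hx1, if_neg hx2,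
                if_neg hx3])]
              simp only [solOf, if_neg hx0, if_neg hx1, if_neg hx2, if_neg hx3]
  · rintro ⟨k0, k1, k2, k3, ⟨c1, c2, c3, c4, c5⟩, rfl⟩
    constructor
    · intro x
      constructor
      · intro h
        simp only [Pz, Pt] at h
        split_ifs at h with h1 h2 h3 h4
        simp only [solOf, if_neg h1, if_neg h2, if_neg h3, if_neg h4]
      · intro t h
        simp only [Pz, Pt] at h
        split_ifs at h with h1 h2 h3 h4 <;>
          injection h with h <;> subst h
        · exact ⟨k0, by simp only [solOf, if_pos h1]⟩
        · exact ⟨k1, by simp only [solOf, if_neg h1, if_pos h2]⟩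
        · exact ⟨k2, by simp only [solOf, if_neg h1, if_neg h2, if_pos h3]⟩
        · exact ⟨k3, by simp only [solOf, if_neg h1, if_neg h2, if_neg h3, if_pos h4]⟩
    · intro x d s s' hs hs'
      have hx : x = ((0:ℤ),(0:ℤ)) ∨ x = ((0:ℤ),(1:ℤ)) ∨ x = ((1:ℤ),(1:ℤ)) ∨
          x = ((1:ℤ),(2:ℤ)) := by
        by_contra h
        push_neg at h
        obtain ⟨h0, h1, h2, h3⟩ := h
        simp only [solOf, if_neg h0, if_neg h1, if_neg h2, if_neg h3] at hs
        exact nomatch hs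
      have hd : d = 0 ∨ d = 1 ∨ d = 2 ∨ d = 3 ∨ d = 4 ∨ d = 5 :=
        (by decide : ∀ d : Fin 6, d = 0 ∨ d = 1 ∨ d = 2 ∨ d = 3 ∨ d = 4 ∨ d = 5) d
      rcases hx with rfl | rfl | rfl | rfl <;>
        rcases hd with rfl | rfl | rfl | rfl | rfl | rfl <;>
        simp only [dirs0, dirs1, dirs2, dirs3, dirs4, dirs5, Prod.mk_add_mk] at hs' <;>
        norm_num [solOf, Prod.ext_iff] at hs hs' <;>
        first
          | exact (Option.some_ne_none _ hs'.symm).elim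
          | (subst hs; subst hs';
             first
               | exact c1 | exact c2 | exact c3 | exact c4 | exact c5
               | exact c1.symm | exact c2.symm | exact c3.symm | exact c4.symm
               | exact c5.symm)

lemma compat_blue : Compat 1 4 1 4 := by decide
lemma compat_red : Compat 4 5 2 2 := by decide

lemma uniq_blue : ∀ k0 k1 k2 k3 : Fin 6, Compat k0 k1 k2 k3 →
    rotTile k0 tA 3 = Color.blue → k0 = 1 ∧ k1 = 4 ∧ k2 = 1 ∧ k3 = 4 := by decide

lemma uniq_red : ∀ k0 k1 k2 k3 : Fin 6, Compat k0 k1 k2 k3 →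
    rotTile k0 tA 3 = Color.red → k0 = 4 ∧ k1 = 5 ∧ k2 = 2 ∧ k3 = 2 := by decide

lemma main_aux (c : Color) (kk0 kk1 kk2 kk3 : Fin 6)
    (hcompat : Compat kk0 kk1 kk2 kk3)
    (hin : rotTile kk0 tA 3 = c)
    (hout1 : rotTile kk1 tB 0 = c)
    (hout2 : rotTile kk3 tA 0 = c)
    (huniq : ∀ k0 k1 k2 k3 : Fin 6, Compat k0 k1 k2 k3 →
      rotTile k0 tA 3 = c → k0 = kk0 ∧ k1 = kk1 ∧ k2 = kk2 ∧ k3 = kk3) :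
    ∃ sol : ℤ × ℤ → Option Tile,
      (IsSolution Pz sol ∧ SolColor sol ((0:ℤ),(0:ℤ)) 3 c ∧
        SolColor sol ((0:ℤ),(1:ℤ)) 0 c ∧ SolColor sol ((1:ℤ),(2:ℤ)) 0 c) ∧
      (∀ sol' : ℤ × ℤ → Option Tile,
        IsSolution Pz sol' → SolColor sol' ((0:ℤ),(0:ℤ)) 3 c → sol' = sol) := by
  refine ⟨solOf kk0 kk1 kk2 kk3, ⟨?_, ?_, ?_, ?_⟩, ?_⟩
  · exact (isSolution_iff _).2 ⟨kk0, kk1, kk2, kk3, hcompat, rfl⟩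
  · exact ⟨rotTile kk0 tA, by simp [solOf], hin⟩
  · exact ⟨rotTile kk1 tB, by norm_num [solOf, Prod.ext_iff], hout1⟩
  · exact ⟨rotTile kk3 tA, by norm_num [solOf, Prod.ext_iff], hout2⟩
  · intro sol' hsol hcol
    obtain ⟨k0, k1, k2, k3, hc, rfl⟩ := (isSolution_iff sol').1 hsol
    obtain ⟨s, hs, hcs⟩ := hcol
    simp only [solOf, if_pos rfl] at hs
    injection hs with hs
    subst hs
    obtain ⟨rfl, rfl, rfl, rfl⟩ := huniq k0 k1 k2 k3 hc hcs
    rfl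

/-- the three-color COPY subpuzzle: one input boundary edge at the bottom and two output boundary edges at the top in two distinct columns; for each color `c ∈ {blue, red}` there is exactly one solution with color `c` at the input edge, and it has color `c` at both output edges. -/
theorem three_color_COPY_subpuzzle :
    ∃ (P : Puzzle) (xIn yOut₁ yOut₂ : ℤ × ℤ),
      IsBoundary P xIn 3 ∧ IsBoundary P yOut₁ 0 ∧ IsBoundary P yOut₂ 0 ∧
      yOut₁.1 ≠ yOut₂.1 ∧ xIn.2 < yOut₁.2 ∧ xIn.2 < yOut₂.2 ∧
      ∀ c ∈ ({Color.blue, Color.red} : Set Color),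
        ∃ sol : ℤ × ℤ → Option Tile,
          (IsSolution P sol ∧ SolColor sol xIn 3 c ∧
            SolColor sol yOut₁ 0 c ∧ SolColor sol yOut₂ 0 c) ∧
          (∀ sol' : ℤ × ℤ → Option Tile,
            IsSolution P sol' → SolColor sol' xIn 3 c → sol' = sol) := by
  refine ⟨Pz, ((0:ℤ),(0:ℤ)), ((0:ℤ),(1:ℤ)), ((1:ℤ),(2:ℤ)), ?_, ?_, ?_, ?_, ?_, ?_, ?_⟩
  · constructor
    · norm_num [Pz, Pt]
      try try exact Option.some_ne_none _
    · rw [show ((0:ℤ),(0:ℤ)) + dirs 3 = ((0:ℤ),(-1:ℤ)) by decide]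
      norm_num [Pz, Pt, Prod.ext_iff]
  · constructor
    · norm_num [Pz, Pt, Prod.ext_iff]
      try exact Option.some_ne_none _
    · rw [show ((0:ℤ),(1:ℤ)) + dirs 0 = ((0:ℤ),(2:ℤ)) by decide]
      norm_num [Pz, Pt, Prod.ext_iff]
  · constructor
    · norm_num [Pz, Pt, Prod.ext_iff]
      try exact Option.some_ne_none _
    · rw [show ((1:ℤ),(2:ℤ)) + dirs 0 = ((1:ℤ),(3:ℤ)) by decide]
      norm_num [Pz, Pt, Prod.ext_iff]
  · norm_num
  · norm_num
  · norm_num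
  · intro c hc
    rcases hc with rfl | hc
    · exact main_aux Color.blue 1 4 1 4 compat_blue (by decide) (by decide) (by decide)
        uniq_blue
    · rw [Set.mem_singleton_iff] at hc
      subst hc
      exact main_aux Color.red 4 5 2 2 compat_red (by decide) (by decide) (by decide)
        uniq_red
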